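/- arXiv:1005.0540 — 3 statements merged into one kernel-verified Lean document; each statement's English description precedes it below -/
import Mathlib

section
/- Let b_1 ≥ b_2 ≥ … ≥ b_ℓ > 0, w > 0, and fix t̄ with 0 < t̄ < 2π/(b_1 w). Suppose (r_1,…,r_ℓ), (r̃_1,…,r̃_ℓ) are nonnegative vectors of Euclidean norm 1, w̃ > 0 satisfies t̄ < 2π/(b_1 w̃), and for each i, r_i · sinc(b_i w t̄/2) = r̃_i · sinc(b_i w̃ t̄/2). If additionally r_i > 0 for all i, then w̃ = w and r̃_i = r_i for all i. -/
open Finset Real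

/-- The cardinal sine function `sinc x = sin x / x`, extended by `sinc 0 = 1`. -/
noncomputable def sinc (x : ℝ) : ℝ := if x = 0 then 1 else Real.sin x / x

lemma sinc_of_ne (x : ℝ) (hx : x ≠ 0) : _root_.sinc x = Real.sin x / x := if_neg hx

lemma sinc_pos' {x : ℝ} (h0 : 0 < x) (hπ : x < π) : 0 < _root_.sinc x := by
  rw [sinc_of_ne x h0.ne']
  exact div_pos (Real.sin_pos_of_pos_of_lt_pi h0 hπ) h0

lemma mul_cos_lt_sin {t : ℝ} (h0 : 0 < t) (hπ : t < π) : t * Real.cos t < Real.sin t := by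
  rcases lt_or_ge t (π / 2) with h | h
  · have hc : 0 < Real.cos t := Real.cos_pos_of_mem_Ioo ⟨by linarith [Real.pi_pos], h⟩
    have ht := Real.lt_tan h0 h
    rw [Real.tan_eq_sin_div_cos] at ht
    exact (lt_div_iff₀ hc).mp ht
  · have hc : Real.cos t ≤ 0 := Real.cos_nonpos_of_pi_div_two_le_of_le h (by linarith [Real.pi_pos])
    have hs := Real.sin_pos_of_pos_of_lt_pi h0 hπ
    nlinarith

lemma sinc_lt_sinc {x y : ℝ} (hx : 0 < x) (hxy : x < y) (hy : y ≤ π) : _root_.sinc y < _root_.sinc x := by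
  have key : StrictAntiOn _root_.sinc (Set.Icc x y) := by
    apply strictAntiOn_of_deriv_neg (convex_Icc x y)
    · apply ContinuousOn.congr (f := fun t => Real.sin t / t)
      · exact Real.continuousOn_sin.div continuousOn_id fun t ht => (hx.trans_le ht.1).ne'
      · intro t ht
        exact sinc_of_ne t (hx.trans_le ht.1).ne'
    · intro t ht
      rw [interior_Icc] at ht
      have ht0 : 0 < t := hx.trans ht.1
      have hde : HasDerivAt (fun s => Real.sin s / s) ((Real.cos t * t - Real.sin t * 1) / t ^ 2) t :=
        (Real.hasDerivAt_sin t).div (hasDerivAt_id t) ht0.ne'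
      have hev : _root_.sinc =ᶠ[nhds t] fun s => Real.sin s / s := by
        filter_upwards [eventually_ne_nhds ht0.ne'] with s hs using sinc_of_ne s hs
      rw [hev.deriv_eq, hde.deriv]
      apply div_neg_of_neg_of_pos
      · have := mul_cos_lt_sin ht0 (ht.2.trans_le hy)
        nlinarith
      · positivity
  exact key (Set.left_mem_Icc.2 hxy.le) (Set.right_mem_Icc.2 hxy.le) hxy

/-- Uniqueness step in the computation of the cut time for the nilpotent contact structure:
if two sets of geodesic parameters give the same radial components at time `t̄` before the
cut time, they coincide. -/
theorem cut_time_uniqueness {ℓ : ℕ} (hℓ : 1 ≤ ℓ) (b : Fin ℓ → ℝ)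
    (hbpos : ∀ i, 0 < b i) (hbmono : ∀ i j : Fin ℓ, i ≤ j → b j ≤ b i)
    (w : ℝ) (hw : 0 < w) (tb : ℝ)
    (htb : 0 < tb) (htc : tb < 2 * π / (b ⟨0, hℓ⟩ * w))
    (r rt : Fin ℓ → ℝ) (hr : ∀ i, 0 ≤ r i) (hrt : ∀ i, 0 ≤ rt i)
    (hrnorm : ∑ i, r i ^ 2 = 1) (hrtnorm : ∑ i, rt i ^ 2 = 1)
    (wt : ℝ) (hwt : 0 < wt) (htct : tb < 2 * π / (b ⟨0, hℓ⟩ * wt))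
    (heq : ∀ i, r i * _root_.sinc (b i * w * tb / 2) = rt i * _root_.sinc (b i * wt * tb / 2))
    (hrposall : ∀ i, 0 < r i) :
    wt = w ∧ ∀ i, rt i = r i := by
  have hble : ∀ i : Fin ℓ, b i ≤ b ⟨0, hℓ⟩ := fun i => hbmono ⟨0, hℓ⟩ i (by simp [Fin.le_def])
  have hxpos : ∀ i, 0 < b i * w * tb / 2 := fun i => by
    have := hbpos i; positivity
  have hypos : ∀ i, 0 < b i * wt * tb / 2 := fun i => by
    have := hbpos i; positivity
  have hxlt : ∀ i, b i * w * tb / 2 < π := by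
    intro i
    have h1 : tb * (b ⟨0, hℓ⟩ * w) < 2 * π := by
      have hbw : 0 < b ⟨0, hℓ⟩ * w := mul_pos (hbpos _) hw
      calc tb * (b ⟨0, hℓ⟩ * w) < (2 * π / (b ⟨0, hℓ⟩ * w)) * (b ⟨0, hℓ⟩ * w) :=
            mul_lt_mul_of_pos_right htc hbw
        _ = 2 * π := div_mul_cancel₀ _ hbw.ne'
    have h2 : b i * w ≤ b ⟨0, hℓ⟩ * w := mul_le_mul_of_nonneg_right (hble i) hw.le
    nlinarith
  have hylt : ∀ i, b i * wt * tb / 2 < π := by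
    intro i
    have h1 : tb * (b ⟨0, hℓ⟩ * wt) < 2 * π := by
      have hbw : 0 < b ⟨0, hℓ⟩ * wt := mul_pos (hbpos _) hwt
      calc tb * (b ⟨0, hℓ⟩ * wt) < (2 * π / (b ⟨0, hℓ⟩ * wt)) * (b ⟨0, hℓ⟩ * wt) :=
            mul_lt_mul_of_pos_right htct hbw
        _ = 2 * π := div_mul_cancel₀ _ hbw.ne'
    have h2 : b i * wt ≤ b ⟨0, hℓ⟩ * wt := mul_le_mul_of_nonneg_right (hble i) hwt.le
    nlinarith
  have hne : (Finset.univ : Finset (Fin ℓ)).Nonempty := ⟨⟨0, hℓ⟩, Finset.mem_univ _⟩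
  rcases lt_trichotomy wt w with hlt | heqw | hgt
  · -- wt < w : then for each i, y_i < x_i, _root_.sinc x_i < _root_.sinc y_i, so rt i < r i
    exfalso
    have hlt_all : ∀ i, rt i < r i := by
      intro i
      have hyx : b i * wt * tb / 2 < b i * w * tb / 2 := by
        have := hbpos i; gcongr
      have hs : _root_.sinc (b i * w * tb / 2) < _root_.sinc (b i * wt * tb / 2) :=
        sinc_lt_sinc (hypos i) hyx (hxlt i).le
      have hsy : 0 < _root_.sinc (b i * wt * tb / 2) := sinc_pos' (hypos i) (hylt i)
      have h := heq i
      nlinarith [hrposall i, hrt i]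
    have : ∑ i, rt i ^ 2 < ∑ i, r i ^ 2 :=
      Finset.sum_lt_sum_of_nonempty hne fun i _ =>
        pow_lt_pow_left₀ (hlt_all i) (hrt i) two_ne_zero
    rw [hrnorm, hrtnorm] at this
    exact lt_irrefl 1 this
  · -- wt = w
    subst heqw
    refine ⟨rfl, fun i => ?_⟩
    have hs : 0 < _root_.sinc (b i * wt * tb / 2) := sinc_pos' (hxpos i) (hxlt i)
    have h := heq i
    exact (mul_right_cancel₀ hs.ne' h.symm)
  · -- w < wt
    exfalso
    have hlt_all : ∀ i, r i < rt i := by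
      intro i
      have hxy : b i * w * tb / 2 < b i * wt * tb / 2 := by
        have := hbpos i; gcongr
      have hs : _root_.sinc (b i * wt * tb / 2) < _root_.sinc (b i * w * tb / 2) :=
        sinc_lt_sinc (hxpos i) hxy (hylt i).le
      have hsy : 0 < _root_.sinc (b i * wt * tb / 2) := sinc_pos' (hypos i) (hylt i)
      have h := heq i
      nlinarith [hrposall i, hrt i]
    have : ∑ i, r i ^ 2 < ∑ i, rt i ^ 2 :=
      Finset.sum_lt_sum_of_nonempty hne fun i _ =>
        pow_lt_pow_left₀ (hlt_all i) (hr i) two_ne_zero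
    rw [hrnorm, hrtnorm] at this
    exact lt_irrefl 1 this
end

section
/- Define x(r,θ,w) = (r/(b w))(cos(b w + θ) − cos θ), y(r,θ,w) = (r/(b w))(sin(b w + θ) − sin θ), z(r,w) = (r²/(2 b w²))(b w − sin(b w)). Then ∂_w z · det(∂(x,y)/∂(r,θ)) + ∂_r z · det(∂(x,y)/∂(θ,w)) = −(4 r³/(b² w⁴)) sin(b w/2)·((b w/2) cos(b w/2) − sin(b w/2)). -/
open Real Matrix

noncomputable def expX (b r θ w : ℝ) : ℝ := r / (b * w) * (cos (b * w + θ) - cos θ)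

noncomputable def expY (b r θ w : ℝ) : ℝ := r / (b * w) * (sin (b * w + θ) - sin θ)

noncomputable def expZ (b r w : ℝ) : ℝ := r ^ 2 / (2 * b * w ^ 2) * (b * w - sin (b * w))

/-- Key simplification in the Jacobian of the exponential map of a nilpotent contact
structure: `∂_w z · det ∂(x,y)/∂(r,θ) + ∂_r z · det ∂(x,y)/∂(θ,w)`
`= −(4r³/(b²w⁴)) sin(bw/2)((bw/2)cos(bw/2) − sin(bw/2))`. -/
theorem jacobian_combination (b : ℝ) (hb : 0 < b) (r : ℝ) (hr : 0 < r) (θ w : ℝ)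
    (hw : w ≠ 0) :
    deriv (fun w' => expZ b r w') w *
        (!![deriv (fun r' => expX b r' θ w) r, deriv (fun θ' => expX b r θ' w) θ;
            deriv (fun r' => expY b r' θ w) r, deriv (fun θ' => expY b r θ' w) θ]).det +
      deriv (fun r' => expZ b r' w) r *
        (!![deriv (fun θ' => expX b r θ' w) θ, deriv (fun w' => expX b r θ w') w;
            deriv (fun θ' => expY b r θ' w) θ, deriv (fun w' => expY b r θ w') w]).det =
      -(4 * r ^ 3 / (b ^ 2 * w ^ 4)) * sin (b * w / 2) *
        (b * w / 2 * cos (b * w / 2) - sin (b * w / 2)) := by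
  have hb0 : (b:ℝ) ≠ 0 := hb.ne'
  have hbw : b * w ≠ 0 := mul_ne_zero hb0 hw
  -- the six partial derivatives
  have hXr : deriv (fun r' => expX b r' θ w) r = (cos (b*w+θ) - cos θ) / (b*w) := by
    have h := (((hasDerivAt_id r).div_const (b*w)).mul_const (cos (b*w+θ) - cos θ)).deriv
    simp only [id_eq] at h
    simp only [expX]; rw [h]; ring
  have hYr : deriv (fun r' => expY b r' θ w) r = (sin (b*w+θ) - sin θ) / (b*w) := by
    have h := (((hasDerivAt_id r).div_const (b*w)).mul_const (sin (b*w+θ) - sin θ)).deriv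
    simp only [id_eq] at h
    simp only [expY]; rw [h]; ring
  have hXθ : deriv (fun θ' => expX b r θ' w) θ = r / (b*w) * (sin θ - sin (b*w+θ)) := by
    have hc := (Real.hasDerivAt_cos (b*w+θ)).comp θ ((hasDerivAt_id θ).const_add (b*w))
    have h := ((hc.sub (Real.hasDerivAt_cos θ)).const_mul (r/(b*w))).deriv
    simp only [id_eq, Function.comp_def, Pi.sub_def, Pi.mul_def, Pi.div_def] at h
    simp only [expX]; rw [h]; ring
  have hYθ : deriv (fun θ' => expY b r θ' w) θ = r / (b*w) * (cos (b*w+θ) - cos θ) := by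
    have hs := (Real.hasDerivAt_sin (b*w+θ)).comp θ ((hasDerivAt_id θ).const_add (b*w))
    have h := ((hs.sub (Real.hasDerivAt_sin θ)).const_mul (r/(b*w))).deriv
    simp only [id_eq, Function.comp_def, Pi.sub_def, Pi.mul_def, Pi.div_def] at h
    simp only [expY]; rw [h]; ring
  have hXw : deriv (fun w' => expX b r θ w') w =
      -r/(b*w^2) * (cos (b*w+θ) - cos θ) - r/w * sin (b*w+θ) := by
    have hf := (hasDerivAt_const w r).div ((hasDerivAt_id w).const_mul b) hbw
    have hc := (Real.hasDerivAt_cos (b*w+θ)).comp w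
      (((hasDerivAt_id w).const_mul b).add_const θ)
    have h := (hf.mul (hc.sub (hasDerivAt_const w (cos θ)))).deriv
    simp only [id_eq, Function.comp_def, Pi.sub_def, Pi.mul_def, Pi.div_def] at h
    simp only [expX]; rw [h]; field_simp; ring
  have hYw : deriv (fun w' => expY b r θ w') w =
      -r/(b*w^2) * (sin (b*w+θ) - sin θ) + r/w * cos (b*w+θ) := by
    have hf := (hasDerivAt_const w r).div ((hasDerivAt_id w).const_mul b) hbw
    have hs := (Real.hasDerivAt_sin (b*w+θ)).comp w
      (((hasDerivAt_id w).const_mul b).add_const θ)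
    have h := (hf.mul (hs.sub (hasDerivAt_const w (sin θ)))).deriv
    simp only [id_eq, Function.comp_def, Pi.sub_def, Pi.mul_def, Pi.div_def] at h
    simp only [expY]; rw [h]; field_simp; ring
  have hZr : deriv (fun r' => expZ b r' w) r = r * (b*w - sin (b*w)) / (b * w^2) := by
    have h := (((hasDerivAt_pow 2 r).div_const (2*b*w^2)).mul_const (b*w - sin (b*w))).deriv
    simp only [expZ]; rw [h]; field_simp; ring
  have hZw : deriv (fun w' => expZ b r w') w =
      r^2 * (b - b * cos (b*w)) / (2*b*w^2) - r^2 * (b*w - sin (b*w)) / (b * w^3) := by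
    have hden : 2 * b * w^2 ≠ 0 := by positivity
    have hf := (hasDerivAt_const w (r^2)).div ((hasDerivAt_pow 2 w).const_mul (2*b)) hden
    have hs := (Real.hasDerivAt_sin (b*w)).comp w ((hasDerivAt_id w).const_mul b)
    have h := (hf.mul (((hasDerivAt_id w).const_mul b).sub hs)).deriv
    simp only [id_eq, Function.comp_def, Pi.sub_def, Pi.mul_def, Pi.div_def] at h
    simp only [expZ]; rw [h]; field_simp; ring
  rw [Matrix.det_fin_two_of, Matrix.det_fin_two_of, hXr, hYr, hXθ, hYθ, hXw, hYw, hZr, hZw]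
  -- trig reductions
  have hS : sin (b*w) = 2 * sin (b*w/2) * cos (b*w/2) := by
    have h := Real.sin_two_mul (b*w/2)
    rw [show 2*(b*w/2) = b*w by ring] at h
    exact h
  have ph : sin (b*w/2)^2 + cos (b*w/2)^2 = 1 := Real.sin_sq_add_cos_sq _
  have pθ : sin θ^2 + cos θ^2 = 1 := Real.sin_sq_add_cos_sq _
  have hC : cos (b*w) = 1 - 2 * sin (b*w/2)^2 := by
    have h := Real.cos_two_mul (b*w/2)
    rw [show 2*(b*w/2) = b*w by ring] at h
    rw [h]; linear_combination 2 * ph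
  rw [Real.cos_add, Real.sin_add, hS, hC]
  set sh := sin (b*w/2)
  set ch := cos (b*w/2)
  field_simp
  linear_combination
    (8*b*w*sh^4*(sh^2+ch^2) + 8*b*w*sh^2*ch^2 - 4*(b*w)^2*sh*ch) * pθ +
    (8*b*w*sh^4 + 8*b*w*sh^2) * ph
end

section
/- Let b₁(t) = 1 + t c₁ and b₂(t) = 1 + t c₂ with constants c₁ ≠ c₂, define a(t) = π / max(b₁(t), b₂(t)) and G(t,s) = (1/s⁶)[ sin²(b₂ s) sin(b₁ s)(b₁ s cos(b₁ s) − sin(b₁ s)) + sin²(b₁ s) sin(b₂ s)(b₂ s cos(b₂ s) − sin(b₂ s)) ]. Then G(t, a(t)) = 0 for all t near 0, and all partial derivatives of G of order ≤ 2 vanish at (t,s) = (0, π). -/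
open Real Filter Topology


lemma triple_product_vanish {E : Type*} [NormedAddCommGroup E] [NormedSpace ℝ E]
    (u v w : E → ℝ) (x₀ : E)
    (hu : ContDiffAt ℝ 2 u x₀) (hv : ContDiffAt ℝ 2 v x₀) (hw : ContDiffAt ℝ 2 w x₀)
    (hu0 : u x₀ = 0) (hv0 : v x₀ = 0) (hw0 : w x₀ = 0) :
    ∀ k : ℕ, k ≤ 2 → iteratedFDeriv ℝ k (fun y => u y * v y * w y) x₀ = 0 := by
  set g : E → ℝ := fun y => v y * w y with hgdef
  have hg : ContDiffAt ℝ 2 g x₀ := hv.mul hw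
  have hg0 : g x₀ = 0 := by simp [hgdef, hv0]
  have one_le : (2 : WithTop ℕ∞) ≠ 0 := two_ne_zero
  -- first derivative of g vanishes
  have hdg : fderiv ℝ g x₀ = 0 := by
    rw [fderiv_fun_mul (hv.differentiableAt one_le) (hw.differentiableAt one_le), hv0, hw0]
    simp
  -- the function f
  set f : E → ℝ := fun y => u y * g y with hfdef
  have hf : ContDiffAt ℝ 2 f x₀ := hu.mul hg
  have hf0 : f x₀ = 0 := by simp [hfdef, hu0]
  have hdf : fderiv ℝ f x₀ = 0 := by
    rw [fderiv_fun_mul (hu.differentiableAt one_le) (hg.differentiableAt one_le), hu0, hg0]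
    simp
  -- second derivative
  have hE : (fderiv ℝ f) =ᶠ[𝓝 x₀] fun y => u y • fderiv ℝ g y + g y • fderiv ℝ u y := by
    have h2 : (2 : WithTop ℕ∞) ≠ (⊤ : ℕ∞) := by norm_num
    filter_upwards [hu.eventually h2, hg.eventually h2] with y hy1 hy2
    exact fderiv_fun_mul (hy1.differentiableAt one_le) (hy2.differentiableAt one_le)
  have hdgu : DifferentiableAt ℝ (fderiv ℝ u) x₀ :=
    (hu.fderiv_right (m := 1) (le_refl _)).differentiableAt one_ne_zero
  have hdgg : DifferentiableAt ℝ (fderiv ℝ g) x₀ :=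
    (hg.fderiv_right (m := 1) (le_refl _)).differentiableAt one_ne_zero
  have hddf : fderiv ℝ (fderiv ℝ f) x₀ = 0 := by
    rw [hE.fderiv_eq]
    rw [fderiv_fun_add ((hu.differentiableAt one_le).fun_smul hdgg)
      ((hg.differentiableAt one_le).fun_smul hdgu)]
    rw [fderiv_fun_smul (hu.differentiableAt one_le) hdgg,
      fderiv_fun_smul (hg.differentiableAt one_le) hdgu, hu0, hg0, hdg]
    ext m
    simp
  intro k hk
  interval_cases k
  · ext m; simp [iteratedFDeriv_zero_apply, hu0]
  · ext m
    rw [show (fun y => u y * v y * w y) = f by funext y; simp [hfdef, hgdef]; ring]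
    simp [iteratedFDeriv_one_apply, hdf]
  · ext m
    rw [show (fun y => u y * v y * w y) = f by funext y; simp [hfdef, hgdef]; ring]
    rw [iteratedFDeriv_two_apply, hddf]
    simp

/-- Vanishing of the Jacobian integrand and of its derivatives up to order 2 at a
resonance point where two frequencies cross transversally. -/
theorem resonance_vanishing (c₁ c₂ : ℝ) (hc : c₁ ≠ c₂) :
    let b₁ : ℝ → ℝ := fun t => 1 + t * c₁
    let b₂ : ℝ → ℝ := fun t => 1 + t * c₂
    let a : ℝ → ℝ := fun t => π / max (b₁ t) (b₂ t)
    let G : ℝ → ℝ → ℝ := fun t s =>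
      1 / s ^ 6 *
        (sin (b₂ t * s) ^ 2 * sin (b₁ t * s) *
            (b₁ t * s * cos (b₁ t * s) - sin (b₁ t * s)) +
          sin (b₁ t * s) ^ 2 * sin (b₂ t * s) *
            (b₂ t * s * cos (b₂ t * s) - sin (b₂ t * s)))
    (∀ᶠ t in 𝓝 (0:ℝ), G t (a t) = 0) ∧
    (∀ k : ℕ, k ≤ 2 →
      iteratedFDeriv ℝ k (fun p : ℝ × ℝ => G p.1 p.2) (0, π) = 0) := by
  intro b₁ b₂ a G
  constructor
  · -- eventually: G t (a t) = 0
    have h1 : ∀ᶠ t in 𝓝 (0:ℝ), (0:ℝ) < 1 + t * c₁ := by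
      have hcont : ContinuousAt (fun t : ℝ => 1 + t * c₁) 0 := by fun_prop
      have := hcont (Ioi_mem_nhds (by norm_num : (1:ℝ)+0*c₁ ∈ Set.Ioi 0))
      exact this
    have h2 : ∀ᶠ t in 𝓝 (0:ℝ), (0:ℝ) < 1 + t * c₂ := by
      have hcont : ContinuousAt (fun t : ℝ => 1 + t * c₂) 0 := by fun_prop
      have := hcont (Ioi_mem_nhds (by norm_num : (1:ℝ)+0*c₂ ∈ Set.Ioi 0))
      exact this
    filter_upwards [h1, h2] with t ht1 ht2
    simp only [G, a, b₁, b₂]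
    rcases max_choice (1 + t * c₁) (1 + t * c₂) with hmax | hmax <;> rw [hmax]
    · have : (1 + t * c₁) * (π / (1 + t * c₁)) = π := by
        field_simp
      rw [this, Real.sin_pi]; ring
    · have : (1 + t * c₂) * (π / (1 + t * c₂)) = π := by
        field_simp
      rw [this, Real.sin_pi]; ring
  · -- derivatives at (0, π)
    set u : ℝ × ℝ → ℝ := fun p => sin ((1 + p.1 * c₁) * p.2) with hudef
    set v : ℝ × ℝ → ℝ := fun p => sin ((1 + p.1 * c₂) * p.2) with hvdef
    set w : ℝ × ℝ → ℝ := fun p =>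
      1 / p.2 ^ 6 *
        (sin ((1 + p.1 * c₂) * p.2) *
            ((1 + p.1 * c₁) * p.2 * cos ((1 + p.1 * c₁) * p.2) - sin ((1 + p.1 * c₁) * p.2)) +
          sin ((1 + p.1 * c₁) * p.2) *
            ((1 + p.1 * c₂) * p.2 * cos ((1 + p.1 * c₂) * p.2) - sin ((1 + p.1 * c₂) * p.2)))
      with hwdef
    have hfact : (fun p : ℝ × ℝ => G p.1 p.2) = fun p => u p * v p * w p := by
      funext p
      simp only [G, b₁, b₂, hudef, hvdef, hwdef]
      ring
    rw [hfact]
    apply triple_product_vanish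
    · exact (ContDiff.sin (n := 2) (by fun_prop)).contDiffAt
    · exact (ContDiff.sin (n := 2) (by fun_prop)).contDiffAt
    · simp only [hwdef]
      have hs1 : ContDiff ℝ 2 fun p : ℝ × ℝ => sin ((1 + p.1 * c₁) * p.2) :=
        ContDiff.sin (by fun_prop)
      have hs2 : ContDiff ℝ 2 fun p : ℝ × ℝ => sin ((1 + p.1 * c₂) * p.2) :=
        ContDiff.sin (by fun_prop)
      have hc1 : ContDiff ℝ 2 fun p : ℝ × ℝ => cos ((1 + p.1 * c₁) * p.2) :=
        ContDiff.cos (by fun_prop)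
      have hc2 : ContDiff ℝ 2 fun p : ℝ × ℝ => cos ((1 + p.1 * c₂) * p.2) :=
        ContDiff.cos (by fun_prop)
      have hpoly : ContDiff ℝ 2 fun p : ℝ × ℝ => (1 + p.1 * c₁) * p.2 := by fun_prop
      have hpoly2 : ContDiff ℝ 2 fun p : ℝ × ℝ => (1 + p.1 * c₂) * p.2 := by fun_prop
      apply ContDiffAt.mul
      · apply ContDiffAt.div (by fun_prop) (by fun_prop)
        simp [Real.pi_ne_zero]
      · exact (((hs2.mul ((hpoly.mul hc1).sub hs1)).add
          (hs1.mul ((hpoly2.mul hc2).sub hs2)))).contDiffAt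
    · simp [hudef, Real.sin_pi]
    · simp [hvdef, Real.sin_pi]
    · simp [hwdef, Real.sin_pi]
end
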